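/- arXiv:2209.06401 — 2 statements merged into one kernel-verified Lean document; each statement's English description precedes it below -/
import Mathlib

section
/- Suppose an r×r symmetric ρ-latin rectangle L can be completed to an n×n symmetric ρ-latin square. Then: (1) ρ_ℓ − e_ℓ ≤ 2(n−r) for all ℓ ∈ [k]; (2) |{ℓ ∈ [k] : ρ_ℓ ≢ e_ℓ (mod 2)}| ≤ n−r; and (3) |{ℓ ∈ [k] : ρ_ℓ ≢ e_ℓ (mod 2)}| ≡ n−r (mod 2). That is, L is ρ-admissible. -/
open Finset

/-- Number of occurrences of the symbol `ℓ` in the `m × m` array `A` (symbols in `Fin k`). -/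
def occ {m k : ℕ} (A : Fin m → Fin m → Fin k) (ℓ : Fin k) : ℕ :=
  (Finset.univ.filter fun p : Fin m × Fin m => A p.1 p.2 = ℓ).card

/-- `A` is a symmetric `ρ`-latin square of order `n` on the symbol set `Fin k`:
each symbol occurs at most once in each row and in each column (rows and columns are
injective), `A` is symmetric, and each symbol `ℓ` occurs exactly `ρ ℓ` times. -/
def IsSymRhoLS {n k : ℕ} (ρ : Fin k → ℕ) (A : Fin n → Fin n → Fin k) : Prop :=
  (∀ i, Function.Injective (A i)) ∧
  (∀ j, Function.Injective fun i => A i j) ∧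
  (∀ i j, A i j = A j i) ∧
  (∀ ℓ, occ A ℓ = ρ ℓ)

/-- `R` is an `r × r` symmetric `ρ`-latin rectangle on the symbol set `Fin k`:
each symbol occurs at most once in each row and in each column, `R` is symmetric,
and each symbol `ℓ` occurs at most `ρ ℓ` times. -/
def IsSymRhoRect {r k : ℕ} (ρ : Fin k → ℕ) (R : Fin r → Fin r → Fin k) : Prop :=
  (∀ i, Function.Injective (R i)) ∧
  (∀ j, Function.Injective fun i => R i j) ∧
  (∀ i j, R i j = R j i) ∧
  (∀ ℓ, occ R ℓ ≤ ρ ℓ)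

/-- `A` completes `R`: `R` is the top-left `r × r` subarray of `A`. -/
def Completes {r n k : ℕ} (h : r ≤ n) (R : Fin r → Fin r → Fin k)
    (A : Fin n → Fin n → Fin k) : Prop :=
  ∀ i j : Fin r, A (Fin.castLE h i) (Fin.castLE h j) = R i j

/-- The number of diagonal cells `A i i` with `i` beyond the first `r` rows holding symbol `ℓ`. -/
def diagTail {n k : ℕ} (r : ℕ) (A : Fin n → Fin n → Fin k) (ℓ : Fin k) : ℕ :=
  (Finset.univ.filter fun i : Fin n => r ≤ (i : ℕ) ∧ A i i = ℓ).card

/-- `μ_I(ℓ)`: the number of rows in `I` in which the symbol `ℓ` does not occur. -/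
def muRows {r k : ℕ} (R : Fin r → Fin r → Fin k) (I : Finset (Fin r)) (ℓ : Fin k) : ℕ :=
  (I.filter fun i => ∀ j, R i j ≠ ℓ).card

/-- `μ_K(i)`: the number of symbols in `K` not occurring in row `i`. -/
def muSyms {r k : ℕ} (R : Fin r → Fin r → Fin k) (K : Finset (Fin k)) (i : Fin r) : ℕ :=
  (K.filter fun ℓ => ∀ j, R i j ≠ ℓ).card

/-- `R` is `ρ`-admissible. -/
def RhoAdmissible {r k : ℕ} (n : ℕ) (ρ : Fin k → ℕ) (R : Fin r → Fin r → Fin k) : Prop :=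
  (∀ ℓ, ρ ℓ - occ R ℓ ≤ 2 * (n - r)) ∧
  (Finset.univ.filter fun ℓ : Fin k => ¬ ρ ℓ % 2 = occ R ℓ % 2).card ≤ n - r ∧
  (Finset.univ.filter fun ℓ : Fin k => ¬ ρ ℓ % 2 = occ R ℓ % 2).card % 2 = (n - r) % 2

/-- `R` is nearly `ρ`-admissible. -/
def NearlyRhoAdmissible {r k : ℕ} (n : ℕ) (ρ : Fin k → ℕ) (R : Fin r → Fin r → Fin k) : Prop :=
  (Finset.univ.filter fun ℓ : Fin k => ¬ ρ ℓ % 2 = occ R ℓ % 2).card ≤ n - r ∧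
  (Finset.univ.filter fun ℓ : Fin k => ¬ ρ ℓ % 2 = occ R ℓ % 2).card % 2 = (n - r) % 2

/-- `R` is `(ρ, d)`-admissible. -/
def RhoDAdmissible {r k : ℕ} (n : ℕ) (ρ d : Fin k → ℕ) (R : Fin r → Fin r → Fin k) : Prop :=
  (∀ ℓ, ρ ℓ - occ R ℓ + d ℓ ≤ 2 * (n - r)) ∧
  (∀ ℓ, Even (ρ ℓ + occ R ℓ + d ℓ))

lemma card_tail (n r : ℕ) (h : r ≤ n) :
    (univ.filter fun i : Fin n => r ≤ (i : ℕ)).card = n - r := by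
  have h1 : (univ.filter fun i : Fin n => (i : ℕ) < r).card = r := by
    rw [show (univ.filter fun i : Fin n => (i : ℕ) < r) = Finset.map (Fin.castLEEmb h) univ by
      ext i
      simp only [mem_filter, mem_univ, true_and, mem_map, Fin.castLEEmb,
        Function.Embedding.coeFn_mk]
      constructor
      · intro hi; exact ⟨⟨i, hi⟩, rfl⟩
      · rintro ⟨j, rfl⟩; exact j.isLt]
    simp
  have h2 := Finset.card_filter_add_card_filter_not
    (s := (univ : Finset (Fin n))) (p := fun i : Fin n => (i : ℕ) < r)
  simp only [not_lt, Finset.card_univ, Fintype.card_fin] at h2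
  omega

lemma occ_mod_two {m k : ℕ} (A : Fin m → Fin m → Fin k) (hsym : ∀ i j, A i j = A j i)
    (ℓ : Fin k) :
    occ A ℓ % 2 = (univ.filter fun i : Fin m => A i i = ℓ).card % 2 := by
  classical
  set S := (univ.filter fun p : Fin m × Fin m => A p.1 p.2 = ℓ) with hS
  have hsplit := Finset.card_filter_add_card_filter_not (s := S)
    (p := fun p : Fin m × Fin m => p.1 = p.2)
  have hdiag : (S.filter fun p => p.1 = p.2).card
      = (univ.filter fun i : Fin m => A i i = ℓ).card := by
    apply Finset.card_bij (fun p _ => p.1)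
    · intro p hp
      simp only [hS, mem_filter, mem_univ, true_and] at hp ⊢
      rw [← hp.2] at hp ⊢ <;> exact hp.1
    · intro p hp q hq h
      simp only [hS, mem_filter] at hp hq
      exact Prod.ext h (by rw [← hp.2, ← hq.2, h])
    · intro i hi
      simp only [mem_filter, mem_univ, true_and] at hi
      exact ⟨(i, i), by simp [hS, hi], rfl⟩
  set T := S.filter (fun p : Fin m × Fin m => p.1 ≠ p.2) with hT
  have hTsplit := Finset.card_filter_add_card_filter_not (s := T)
    (p := fun p : Fin m × Fin m => p.1 < p.2)
  have hkey : (T.filter fun p => p.1 < p.2).card = (T.filter fun p => ¬ p.1 < p.2).card := by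
    apply Finset.card_bij (fun p _ => p.swap)
    · intro p hp
      simp only [hT, hS, mem_filter, mem_univ, true_and] at hp ⊢
      exact ⟨⟨by rw [hsym]; exact hp.1.1, (Ne.symm hp.1.2)⟩, not_lt.mpr (le_of_lt hp.2)⟩
    · intro p hp q hq h
      exact Prod.swap_injective h
    · intro q hq
      simp only [hT, hS, mem_filter, mem_univ, true_and] at hq
      refine ⟨q.swap, ?_, by simp⟩
      simp only [hT, hS, mem_filter, mem_univ, true_and, Prod.fst_swap, Prod.snd_swap]
      exact ⟨⟨by rw [hsym]; exact hq.1.1, Ne.symm hq.1.2⟩,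
        lt_of_le_of_ne (not_lt.mp hq.2) (Ne.symm hq.1.2)⟩
  have : occ A ℓ = S.card := rfl
  omega

/-- If an `r × r` symmetric `ρ`-latin rectangle can be completed to an
`n × n` symmetric `ρ`-latin square, then it is `ρ`-admissible. -/
theorem rhoAdmissible_of_completion (n k r : ℕ) (hn : 0 < n) (hrn : r ≤ n) (hnk : n ≤ k)
    (ρ : Fin k → ℕ) (hρ1 : ∀ ℓ, 1 ≤ ρ ℓ) (hρn : ∀ ℓ, ρ ℓ ≤ n)
    (hρsum : ∑ ℓ, ρ ℓ = n ^ 2)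
    (R : Fin r → Fin r → Fin k) (hR : IsSymRhoRect ρ R)
    (hcomp : ∃ A : Fin n → Fin n → Fin k, IsSymRhoLS ρ A ∧ Completes hrn R A) :
    RhoAdmissible n ρ R := by
  classical
  obtain ⟨A, ⟨hrowA, hcolA, hsymA, hoccA⟩, hC⟩ := hcomp
  obtain ⟨hrowR, hcolR, hsymR, hoccR⟩ := hR
  have hblock : ∀ ℓ : Fin k, occ R ℓ =
      (((univ : Finset (Fin n × Fin n)).filter fun p => A p.1 p.2 = ℓ).filter
        fun p : Fin n × Fin n => (p.1 : ℕ) < r ∧ (p.2 : ℕ) < r).card := by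
    intro ℓ
    apply Finset.card_bij (fun q _ => ((Fin.castLE hrn q.1 : Fin n), (Fin.castLE hrn q.2 : Fin n)))
    · intro q hq
      simp only [occ, mem_filter, mem_univ, true_and] at hq ⊢
      exact ⟨by rw [hC]; exact hq, q.1.isLt, q.2.isLt⟩
    · intro p hp q hq h
      have h1 := congrArg Prod.fst h
      have h2 := congrArg Prod.snd h
      exact Prod.ext (Fin.castLE_injective hrn h1) (Fin.castLE_injective hrn h2)
    · intro p hp
      simp only [mem_filter, mem_univ, true_and] at hp
      refine ⟨(⟨(p.1 : ℕ), hp.2.1⟩, ⟨(p.2 : ℕ), hp.2.2⟩), ?_, ?_⟩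
      · simp only [occ, mem_filter, mem_univ, true_and]
        rw [← hC]
        have e1 : Fin.castLE hrn (⟨(p.1 : ℕ), hp.2.1⟩ : Fin r) = p.1 := by
          apply Fin.ext; rfl
        have e2 : Fin.castLE hrn (⟨(p.2 : ℕ), hp.2.2⟩ : Fin r) = p.2 := by
          apply Fin.ext; rfl
        rw [e1, e2]; exact hp.1
      · exact Prod.ext (Fin.ext rfl) (Fin.ext rfl)
  have hdiagR : ∀ ℓ : Fin k,
      ((univ : Finset (Fin r)).filter fun i => R i i = ℓ).card =
      ((univ : Finset (Fin n)).filter fun i : Fin n => (i : ℕ) < r ∧ A i i = ℓ).card := by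
    intro ℓ
    apply Finset.card_bij (fun i _ => (Fin.castLE hrn i : Fin n))
    · intro i hi
      simp only [mem_filter, mem_univ, true_and] at hi ⊢
      exact ⟨i.isLt, by rw [hC]; exact hi⟩
    · intro i hi j hj h
      exact Fin.castLE_injective hrn h
    · intro i hi
      simp only [mem_filter, mem_univ, true_and] at hi
      refine ⟨⟨(i : ℕ), hi.1⟩, ?_, Fin.ext rfl⟩
      simp only [mem_filter, mem_univ, true_and]
      rw [← hC]
      have e1 : Fin.castLE hrn (⟨(i : ℕ), hi.1⟩ : Fin r) = i := Fin.ext rfl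
      rw [e1]; exact hi.2
  refine ⟨?_, ?_, ?_⟩
  · -- condition (1)
    intro ℓ
    set S := (univ : Finset (Fin n × Fin n)).filter (fun p => A p.1 p.2 = ℓ) with hSdef
    have hsplit := Finset.card_filter_add_card_filter_not (s := S)
      (p := fun p : Fin n × Fin n => (p.1 : ℕ) < r ∧ (p.2 : ℕ) < r)
    set Rest := S.filter (fun p : Fin n × Fin n => ¬ ((p.1 : ℕ) < r ∧ (p.2 : ℕ) < r)) with hRest
    have hsplit2 := Finset.card_filter_add_card_filter_not (s := Rest)
      (p := fun p : Fin n × Fin n => r ≤ (p.1 : ℕ))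
    have hX : (Rest.filter fun p : Fin n × Fin n => r ≤ (p.1 : ℕ)).card ≤ n - r := by
      rw [← card_tail n r hrn]
      apply Finset.card_le_card_of_injOn (fun p => p.1)
      · intro p hp
        simp only [mem_coe, hRest, hSdef, mem_filter, mem_univ, true_and] at hp ⊢
        exact hp.2
      · intro p hp q hq h
        simp only [coe_filter, Set.mem_setOf_eq, hRest, hSdef, mem_filter, mem_univ,
          true_and] at hp hq
        simp only at h
        have : A p.1 p.2 = A q.1 q.2 := by rw [hp.1.1, hq.1.1]
        rw [h] at this
        exact Prod.ext h (hrowA q.1 this)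
    have hY : (Rest.filter fun p : Fin n × Fin n => ¬ r ≤ (p.1 : ℕ)).card ≤ n - r := by
      rw [← card_tail n r hrn]
      apply Finset.card_le_card_of_injOn (fun p => p.2)
      · intro p hp
        simp only [mem_coe, hRest, hSdef, mem_filter, mem_univ, true_and, not_le, not_and, not_lt] at hp ⊢
        exact hp.1.2 hp.2
      · intro p hp q hq h
        simp only [coe_filter, Set.mem_setOf_eq, hRest, hSdef, mem_filter, mem_univ,
          true_and] at hp hq
        simp only at h
        have : A p.1 p.2 = A q.1 q.2 := by rw [hp.1.1, hq.1.1]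
        rw [h] at this
        exact Prod.ext (hcolA q.2 this) h
    have hρ : ρ ℓ = S.card := by rw [← hoccA ℓ]; rfl
    have hB := hblock ℓ
    rw [← hSdef] at hB
    omega
  all_goals {
  have hparA : ∀ ℓ, ρ ℓ % 2 = ((univ : Finset (Fin n)).filter fun i => A i i = ℓ).card % 2 := by
    intro ℓ; rw [← hoccA ℓ]; exact occ_mod_two A hsymA ℓ
  have hparR : ∀ ℓ, occ R ℓ % 2 = ((univ : Finset (Fin r)).filter fun i => R i i = ℓ).card % 2 :=
    occ_mod_two R hsymR
  have hsplitdiag : ∀ ℓ, ((univ : Finset (Fin n)).filter fun i => A i i = ℓ).card =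
      ((univ : Finset (Fin n)).filter fun i : Fin n => (i : ℕ) < r ∧ A i i = ℓ).card
        + diagTail r A ℓ := by
    intro ℓ
    have h := Finset.card_filter_add_card_filter_not
      (s := (univ : Finset (Fin n)).filter fun i => A i i = ℓ)
      (p := fun i : Fin n => (i : ℕ) < r)
    rw [Finset.filter_filter, Finset.filter_filter] at h
    rw [show ((univ : Finset (Fin n)).filter fun i : Fin n => (i : ℕ) < r ∧ A i i = ℓ) =
        (univ : Finset (Fin n)).filter fun i : Fin n => A i i = ℓ ∧ (i : ℕ) < r by
      apply Finset.filter_congr; intro i _; exact and_comm]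
    rw [show diagTail r A ℓ = (((univ : Finset (Fin n))).filter
        fun i : Fin n => A i i = ℓ ∧ ¬ (i : ℕ) < r).card by
      unfold diagTail
      congr 1
      apply Finset.filter_congr; intro i _; rw [not_lt]; exact and_comm]
    omega
  have hmismatch : ((univ : Finset (Fin k)).filter fun ℓ => ¬ ρ ℓ % 2 = occ R ℓ % 2) =
      (univ : Finset (Fin k)).filter fun ℓ => diagTail r A ℓ % 2 = 1 := by
    apply Finset.filter_congr
    intro ℓ _
    have h1 := hparA ℓ
    have h2 := hparR ℓ
    have h3 := hsplitdiag ℓ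
    have h4 := hdiagR ℓ
    constructor <;> intro h <;> omega
  have hsum : ∑ ℓ, diagTail r A ℓ = n - r := by
    have hfib := Finset.card_eq_sum_card_fiberwise
      (s := (univ : Finset (Fin n)).filter fun i : Fin n => r ≤ (i : ℕ))
      (t := (univ : Finset (Fin k))) (f := fun i => A i i) (fun x _ => mem_univ _)
    rw [card_tail n r hrn] at hfib
    rw [hfib]
    apply Finset.sum_congr rfl
    intro ℓ _
    unfold diagTail
    rw [Finset.filter_filter]
  have hcardle : ((univ : Finset (Fin k)).filter fun ℓ => diagTail r A ℓ % 2 = 1).card ≤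
      ∑ ℓ, diagTail r A ℓ := by
    rw [Finset.card_filter]
    apply Finset.sum_le_sum
    intro ℓ _
    split <;> omega
  have hcardmod : ((univ : Finset (Fin k)).filter fun ℓ => diagTail r A ℓ % 2 = 1).card % 2 =
      (∑ ℓ, diagTail r A ℓ) % 2 := by
    rw [Finset.card_filter, Finset.sum_nat_mod,
      Finset.sum_congr rfl (fun ℓ _ => by split <;> omega :
        ∀ ℓ ∈ (univ : Finset (Fin k)),
          (if diagTail r A ℓ % 2 = 1 then 1 else 0) % 2 = diagTail r A ℓ % 2),
      ← Finset.sum_nat_mod]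
  rw [hmismatch]
  omega }
end

section
/- Suppose an r×r symmetric ρ-latin rectangle L can be completed to an n×n symmetric ρ-latin square L' with diagonal tail d = (d_1,…,d_k). Then ρ_ℓ − e_ℓ + d_ℓ ≤ 2(n−r) and ρ_ℓ − e_ℓ + d_ℓ ≡ 0 (mod 2) for every ℓ ∈ [k]; that is, L is (ρ,d)-admissible. -/
open Finset

/-- If an `r × r` symmetric `ρ`-latin rectangle can be completed to an
`n × n` symmetric `ρ`-latin square with diagonal tail `d`, then it is `(ρ, d)`-admissible. -/
theorem rhoDAdmissible_of_completion (n k r : ℕ) (hn : 0 < n) (hrn : r ≤ n) (hnk : n ≤ k)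
    (ρ : Fin k → ℕ) (hρ1 : ∀ ℓ, 1 ≤ ρ ℓ) (hρn : ∀ ℓ, ρ ℓ ≤ n)
    (hρsum : ∑ ℓ, ρ ℓ = n ^ 2)
    (R : Fin r → Fin r → Fin k) (hR : IsSymRhoRect ρ R) (d : Fin k → ℕ)
    (hcomp : ∃ A : Fin n → Fin n → Fin k, IsSymRhoLS ρ A ∧ Completes hrn R A ∧
        ∀ ℓ, diagTail r A ℓ = d ℓ) :
    RhoDAdmissible n ρ d R := by
  obtain ⟨A, ⟨hrowA, hcolA, hsymA, hoccA⟩, hcompl, hdiagA⟩ := hcomp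
  have key : ∀ ℓ : Fin k, ∃ p : ℕ, ρ ℓ = occ R ℓ + 2 * p + d ℓ ∧ p + d ℓ ≤ n - r := by
    intro ℓ
    classical
    set S : Finset (Fin n × Fin n) := univ.filter fun p => A p.1 p.2 = ℓ with hS
    set Inner := S.filter (fun p => (p.1 : ℕ) < r ∧ (p.2 : ℕ) < r) with hInner
    set B := S.filter (fun p => ¬((p.1 : ℕ) < r ∧ (p.2 : ℕ) < r)) with hB
    set Low := B.filter (fun p => p.1 < p.2) with hLow
    set B2 := B.filter (fun p => ¬ p.1 < p.2) with hB2
    set Upp := B2.filter (fun p => p.2 < p.1) with hUpp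
    set Diag := B2.filter (fun p => ¬ p.2 < p.1) with hDiag
    have hScard : S.card = ρ ℓ := hoccA ℓ
    have split1 : Inner.card + B.card = S.card :=
      Finset.card_filter_add_card_filter_not _
    have split2 : Low.card + B2.card = B.card :=
      Finset.card_filter_add_card_filter_not _
    have split3 : Upp.card + Diag.card = B2.card :=
      Finset.card_filter_add_card_filter_not _
    -- membership characterizations
    have memLow : ∀ p : Fin n × Fin n, p ∈ Low ↔
        A p.1 p.2 = ℓ ∧ ¬((p.1 : ℕ) < r ∧ (p.2 : ℕ) < r) ∧ p.1 < p.2 := by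
      intro p
      simp only [hLow, hB, hS, Finset.mem_filter, Finset.mem_univ, true_and]
      tauto
    have memUpp : ∀ p : Fin n × Fin n, p ∈ Upp ↔
        A p.1 p.2 = ℓ ∧ ¬((p.1 : ℕ) < r ∧ (p.2 : ℕ) < r) ∧ p.2 < p.1 := by
      intro p
      simp only [hUpp, hB2, hB, hS, Finset.mem_filter, Finset.mem_univ, true_and]
      constructor
      · rintro ⟨⟨⟨h1, h2⟩, h3⟩, h4⟩; exact ⟨h1, h2, h4⟩
      · rintro ⟨h1, h2, h4⟩; exact ⟨⟨⟨h1, h2⟩, asymm h4⟩, h4⟩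
    have memDiag : ∀ p : Fin n × Fin n, p ∈ Diag ↔
        A p.1 p.2 = ℓ ∧ p.1 = p.2 ∧ r ≤ (p.1 : ℕ) := by
      intro p
      simp only [hDiag, hB2, hB, hS, Finset.mem_filter, Finset.mem_univ, true_and]
      constructor
      · rintro ⟨⟨⟨h1, h2⟩, h3⟩, h4⟩
        have he : p.1 = p.2 := le_antisymm (le_of_not_gt h4) (le_of_not_gt h3)
        refine ⟨h1, he, ?_⟩
        rw [← he] at h2; omega
      · rintro ⟨h1, he, h2⟩
        refine ⟨⟨⟨h1, by rw [← he]; omega⟩, ?_⟩, ?_⟩ <;>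
          · rw [he]; exact lt_irrefl _
    -- Low and Upp have the same cardinality
    have hLU : Low.card = Upp.card := by
      refine Finset.card_bij' (fun p _ => p.swap) (fun p _ => p.swap) ?_ ?_
        (fun p _ => rfl) (fun p _ => rfl)
      · intro p hp
        rw [memLow] at hp
        rw [memUpp]
        exact ⟨by rw [← hsymA]; exact hp.1, by tauto, hp.2.2⟩
      · intro p hp
        rw [memUpp] at hp
        rw [memLow]
        exact ⟨by rw [← hsymA]; exact hp.1, by tauto, hp.2.2⟩
    -- Inner corresponds to occurrences in R
    have hInnerCard : Inner.card = occ R ℓ := by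
      unfold occ
      refine Finset.card_bij'
        (fun (p : Fin n × Fin n) (_ : p ∈ Inner) =>
          ((⟨(p.1 : ℕ), by
              have := (Finset.mem_filter.mp ‹p ∈ Inner›).2.1; exact this⟩ : Fin r),
           (⟨(p.2 : ℕ), by
              have := (Finset.mem_filter.mp ‹p ∈ Inner›).2.2; exact this⟩ : Fin r)))
        (fun (q : Fin r × Fin r) _ => (Fin.castLE hrn q.1, Fin.castLE hrn q.2))
        ?_ ?_ (fun p _ => Prod.ext (Fin.ext rfl) (Fin.ext rfl))
        (fun q _ => Prod.ext (Fin.ext rfl) (Fin.ext rfl))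
      · intro p hp
        have hp' := Finset.mem_filter.mp hp
        have hpS := Finset.mem_filter.mp hp'.1
        simp only [Finset.mem_filter, Finset.mem_univ, true_and]
        rw [← hcompl]
        convert hpS.2 using 2 <;> apply Fin.ext <;> rfl
      · intro q hq
        have hq' := Finset.mem_filter.mp hq
        apply Finset.mem_filter.mpr
        constructor
        · apply Finset.mem_filter.mpr
          refine ⟨Finset.mem_univ _, ?_⟩
          rw [hcompl]; exact hq'.2
        · exact ⟨q.1.isLt, q.2.isLt⟩
    -- Diag corresponds to the diagonal tail
    have hDiagCard : Diag.card = d ℓ := by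
      rw [← hdiagA ℓ]
      unfold diagTail
      refine Finset.card_bij' (fun (p : Fin n × Fin n) (_ : p ∈ Diag) => p.1)
        (fun (i : Fin n) _ => (i, i)) ?_ ?_ ?_ (fun i _ => rfl)
      · intro p hp
        rw [memDiag] at hp
        simp only [Finset.mem_filter, Finset.mem_univ, true_and]
        exact ⟨hp.2.2, by rw [← hp.2.1] at hp ⊢; exact hp.1⟩
      · intro i hi
        simp only [Finset.mem_filter, Finset.mem_univ, true_and] at hi
        rw [memDiag]
        exact ⟨hi.2, rfl, hi.1⟩
      · intro p hp
        rw [memDiag] at hp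
        exact Prod.ext_iff.mpr ⟨rfl, hp.2.1⟩
    -- bound: Low.card + Diag.card ≤ n - r
    have hbound : Low.card + d ℓ ≤ n - r := by
      have hdisj : Disjoint Low Diag := by
        rw [Finset.disjoint_left]
        intro p hp hq
        rw [memLow] at hp; rw [memDiag] at hq
        exact absurd (hq.2.1 ▸ hp.2.2) (lt_irrefl _)
      rw [← hDiagCard, ← Finset.card_union_of_disjoint hdisj]
      have hsub : ∀ p ∈ Low ∪ Diag, p.2 ∈ univ.filter fun i : Fin n => r ≤ (i : ℕ) := by
        intro p hp
        simp only [Finset.mem_filter, Finset.mem_univ, true_and]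
        rcases Finset.mem_union.mp hp with h | h
        · rw [memLow] at h
          have := h.2.2
          have : (p.1 : ℕ) < (p.2 : ℕ) := this
          omega
        · rw [memDiag] at h
          rw [← h.2.1]; exact h.2.2
      have hinj : Set.InjOn Prod.snd ((Low ∪ Diag : Finset (Fin n × Fin n)) : Set (Fin n × Fin n)) := by
        intro p hp q hq hpq
        simp only [Finset.mem_coe] at hp hq
        have hA : ∀ x ∈ Low ∪ Diag, A x.1 x.2 = ℓ := by
          intro x hx
          rcases Finset.mem_union.mp hx with h | h
          · exact ((memLow x).mp h).1
          · exact ((memDiag x).mp h).1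
        have h1 := hA p hp
        have h2 := hA q hq
        rw [hpq] at h1
        have : p.1 = q.1 := hcolA q.2 (by show A p.1 q.2 = A q.1 q.2; rw [h1, h2])
        exact Prod.ext_iff.mpr ⟨this, hpq⟩
      have hcard := Finset.card_le_card_of_injOn Prod.snd hsub hinj
      have htail : (univ.filter fun i : Fin n => r ≤ (i : ℕ)).card = n - r := by
        have h1 : (univ.filter fun i : Fin n => (i : ℕ) < r).card = r := by
          have : (univ.filter fun i : Fin n => (i : ℕ) < r) =
              (univ : Finset (Fin r)).map (Fin.castLEEmb hrn) := by
            ext i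
            simp only [Finset.mem_filter, Finset.mem_univ, true_and, Finset.mem_map,
              Fin.castLEEmb, Function.Embedding.coeFn_mk]
            constructor
            · intro h; exact ⟨⟨(i : ℕ), h⟩, Fin.ext rfl⟩
            · rintro ⟨j, rfl⟩; exact j.isLt
          rw [this, Finset.card_map, Finset.card_univ, Fintype.card_fin]
        have h2 := Finset.card_filter_add_card_filter_not
          (s := (univ : Finset (Fin n))) (p := fun i => (i : ℕ) < r)
        simp only [not_lt] at h2
        rw [h1, Finset.card_univ, Fintype.card_fin] at h2
        omega
      rw [htail] at hcard
      exact hcard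
    refine ⟨Low.card, ?_, hbound⟩
    omega
  constructor
  · intro ℓ
    obtain ⟨p, h1, h2⟩ := key ℓ
    omega
  · intro ℓ
    obtain ⟨p, h1, h2⟩ := key ℓ
    exact ⟨occ R ℓ + p + d ℓ, by omega⟩
end
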